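/- arXiv:2011.08360 — 4 statements merged into one kernel-verified Lean document; each statement's English description precedes it below -/
import Mathlib

section
/- Given a symmetric matrix A ∈ ℝ^{p×p} with eigenvalue decomposition A = Σᵢ λᵢ vᵢ vᵢᵀ where λ₁ ≥ ⋯ ≥ λ_p, the matrix A₀ = Σᵢ max(λᵢ, 0) vᵢ vᵢᵀ minimizes ‖A − X‖_* over all positive semidefinite matrices X, where ‖·‖_* is the nuclear norm (sum of singular values). -/
open Matrix
noncomputable section

/-- Frobenius norm of a real matrix. -/
def frob {m n : Type*} [Fintype m] [Fintype n] (A : Matrix m n ℝ) : ℝ :=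
  Real.sqrt (∑ i, ∑ j, (A i j) ^ 2)

/-- Spectral (operator ℓ²→ℓ²) norm of a real matrix. -/
def spec {m n : Type*} [Fintype m] [Fintype n] [DecidableEq n] (A : Matrix m n ℝ) : ℝ :=
  ‖LinearMap.toContinuousLinearMap (Matrix.toEuclideanLin A)‖

/-- Nuclear norm: sum of singular values (square roots of eigenvalues of AᵀA). -/
def nuc {m n : Type*} [Fintype m] [Fintype n] [DecidableEq n] (A : Matrix m n ℝ) : ℝ :=
  ∑ i, Real.sqrt ((Matrix.isHermitian_conjTranspose_mul_self A).eigenvalues i)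

section sqrtPort
open scoped MatrixOrder

/-- The square root of a positive semidefinite real matrix (as in the older Mathlib). -/
def Matrix.PosSemidef.sqrt {n : Type*} [Fintype n] [DecidableEq n] {A : Matrix n n ℝ}
    (hA : A.PosSemidef) : Matrix n n ℝ :=
  (hA.1.eigenvectorUnitary : Matrix n n ℝ) * diagonal (Real.sqrt ∘ hA.1.eigenvalues) *
    (star hA.1.eigenvectorUnitary : Matrix n n ℝ)

lemma Matrix.PosSemidef.sqrt_eq_cfc_sqrt {n : Type*} [Fintype n] [DecidableEq n]
    {A : Matrix n n ℝ} (hA : A.PosSemidef) : hA.sqrt = CFC.sqrt A := by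
  rw [CFC.sqrt_eq_cfc, cfc_nnreal_eq_real _ A, hA.1.cfc_eq]
  simp only [IsHermitian.cfc, Matrix.PosSemidef.sqrt]
  congr 2
  congr 1
  funext i
  simp [max_eq_left (hA.eigenvalues_nonneg i)]

lemma Matrix.PosSemidef.posSemidef_sqrt {n : Type*} [Fintype n] [DecidableEq n]
    {A : Matrix n n ℝ} (hA : A.PosSemidef) : hA.sqrt.PosSemidef := by
  rw [hA.sqrt_eq_cfc_sqrt]
  exact (CFC.sqrt_nonneg A).posSemidef

lemma Matrix.PosSemidef.sqrt_mul_self {n : Type*} [Fintype n] [DecidableEq n]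
    {A : Matrix n n ℝ} (hA : A.PosSemidef) : hA.sqrt * hA.sqrt = A := by
  rw [hA.sqrt_eq_cfc_sqrt]
  exact CFC.sqrt_mul_sqrt_self A hA.nonneg

lemma Matrix.PosSemidef.eq_sqrt_of_sq_eq {n : Type*} [Fintype n] [DecidableEq n]
    {A : Matrix n n ℝ} (hA : A.PosSemidef) (B : Matrix n n ℝ) (hB : B.PosSemidef)
    (hAB : A ^ 2 = B) : A = hB.sqrt := by
  rw [hB.sqrt_eq_cfc_sqrt]
  exact (CFC.sqrt_unique (by rw [← hAB, pow_two]) hA.nonneg).symm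

end sqrtPort

lemma trace_nonneg_of_psd {n : Type*} [Fintype n] [DecidableEq n]
    {B : Matrix n n ℝ} (hB : B.PosSemidef) : 0 ≤ B.trace := by
  rw [Matrix.trace]
  refine Finset.sum_nonneg fun i _ => ?_
  exact hB.diag_nonneg

lemma trace_mul_psd_nonneg {n : Type*} [Fintype n] [DecidableEq n]
    {B P : Matrix n n ℝ} (hB : B.PosSemidef) (hP : P.PosSemidef) :
    0 ≤ (B * P).trace := by
  obtain ⟨S, hSpsd, hSS⟩ : ∃ S : Matrix n n ℝ, S.PosSemidef ∧ S * S = P :=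
    ⟨hP.sqrt, hP.posSemidef_sqrt, hP.sqrt_mul_self⟩
  have h1 : (B * P).trace = (S * B * S).trace := by
    rw [← hSS, ← mul_assoc, Matrix.trace_mul_cycle]
  rw [h1]
  have h2 : (S * B * S).PosSemidef := by
    have := hB.mul_mul_conjTranspose_same S
    rwa [hSpsd.1] at this
  exact trace_nonneg_of_psd h2

lemma trace_sqrt_eq {n : Type*} [Fintype n] [DecidableEq n]
    {N : Matrix n n ℝ} (hN : N.PosSemidef) :
    hN.sqrt.trace = ∑ i, Real.sqrt (hN.1.eigenvalues i) := by
  rw [Matrix.PosSemidef.sqrt, Matrix.trace_mul_cycle]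
  have h1 : (star (hN.1.eigenvectorUnitary : Matrix n n ℝ)) *
      (hN.1.eigenvectorUnitary : Matrix n n ℝ) = 1 := by
    exact Unitary.coe_star_mul_self hN.1.eigenvectorUnitary
  rw [h1, one_mul, Matrix.trace_diagonal]
  simp

lemma sqrt_add_self_psd {n : Type*} [Fintype n] [DecidableEq n]
    {M : Matrix n n ℝ} (hM : M.IsHermitian) (hpsd : (Mᵀ * M).PosSemidef) :
    (hpsd.sqrt + M).PosSemidef := by
  set U : Matrix n n ℝ := (hM.eigenvectorUnitary : Matrix n n ℝ) with hU
  have hUU : star U * U = 1 := Unitary.coe_star_mul_self hM.eigenvectorUnitary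
  have hMT : Mᵀ = M := by
    have := hM.eq
    rwa [Matrix.conjTranspose_eq_transpose_of_trivial] at this
  have hspec : M = U * Matrix.diagonal hM.eigenvalues * star U := by
    have := hM.spectral_theorem
    simpa using this
  have key : ∀ D E : Matrix n n ℝ,
      (U * D * star U) * (U * E * star U) = U * (D * E) * star U := by
    intro D E
    have h : (U * D * star U) * (U * E * star U) = U * D * (star U * U) * (E * star U) := by
      noncomm_ring
    rw [h, hUU, mul_one]
    noncomm_ring
  have hpsdconj : ∀ d : n → ℝ, (0 ≤ d) →
      (U * Matrix.diagonal d * star U).PosSemidef := by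
    intro d hd
    have := (Matrix.PosSemidef.diagonal hd).mul_mul_conjTranspose_same U
    rwa [← Matrix.star_eq_conjTranspose] at this
  have habs : hpsd.sqrt = U * Matrix.diagonal (fun i => |hM.eigenvalues i|) * star U := by
    symm
    apply Matrix.PosSemidef.eq_sqrt_of_sq_eq
    · exact hpsdconj _ (fun i => abs_nonneg _)
    · have hdd : Matrix.diagonal (fun i => |hM.eigenvalues i|)
          * Matrix.diagonal (fun i => |hM.eigenvalues i|)
          = Matrix.diagonal hM.eigenvalues * Matrix.diagonal hM.eigenvalues := by
        rw [Matrix.diagonal_mul_diagonal, Matrix.diagonal_mul_diagonal]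
        exact congrArg Matrix.diagonal (funext fun i => abs_mul_abs_self _)
      rw [pow_two, hMT]
      conv_rhs => rw [hspec]
      rw [key, key, hdd]
  have hsum : U * Matrix.diagonal (fun i => |hM.eigenvalues i|) * star U
      + U * Matrix.diagonal hM.eigenvalues * star U
      = U * Matrix.diagonal (fun i => |hM.eigenvalues i| + hM.eigenvalues i) * star U := by
    rw [← Matrix.diagonal_add]
    noncomm_ring
  have hfin := hpsdconj (fun i => |hM.eigenvalues i| + hM.eigenvalues i)
    (by
      intro i
      simp only [Pi.zero_apply]
      linarith [neg_abs_le (hM.eigenvalues i), abs_nonneg (hM.eigenvalues i)])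
  rw [← hsum, ← hspec] at hfin
  rw [habs]
  exact hfin

variable {p : ℕ}

/-- Linear combination of the rank-one frames. -/
def Fm (v : Fin p → (Fin p → ℝ)) (c : Fin p → ℝ) : Matrix (Fin p) (Fin p) ℝ :=
  ∑ i, c i • Matrix.vecMulVec (v i) (v i)

lemma Fm_apply (v : Fin p → (Fin p → ℝ)) (c : Fin p → ℝ) (j k : Fin p) :
    Fm v c j k = ∑ i, c i * (v i j * v i k) := by
  simp [Fm, Matrix.sum_apply, Matrix.vecMulVec_apply]

section ortho
variable {v : Fin p → (Fin p → ℝ)}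
  (hv : ∀ i j, ∑ k, v i k * v j k = if i = j then (1 : ℝ) else 0)
include hv

lemma Fm_mul (c d : Fin p → ℝ) :
    Fm v c * Fm v d = Fm v (fun i => c i * d i) := by
  ext j k
  rw [Matrix.mul_apply]
  simp only [Fm_apply]
  have h1 : ∀ l, (∑ i, c i * (v i j * v i l)) * (∑ m, d m * (v m l * v m k))
      = ∑ i, ∑ m, (c i * d m * (v i j * v m k)) * (v i l * v m l) := by
    intro l
    rw [Finset.sum_mul_sum]
    refine Finset.sum_congr rfl fun i _ => Finset.sum_congr rfl fun m _ => by ring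
  simp_rw [h1]
  rw [Finset.sum_comm]
  refine Finset.sum_congr rfl fun i _ => ?_
  rw [Finset.sum_comm]
  have h2 : ∀ m, ∑ l, (c i * d m * (v i j * v m k)) * (v i l * v m l)
      = if i = m then c i * d m * (v i j * v m k) else 0 := by
    intro m
    rw [← Finset.mul_sum, hv i m]
    split <;> simp
  simp_rw [h2]
  rw [Finset.sum_ite_eq]
  simp [mul_assoc]

lemma Fm_trace (c : Fin p → ℝ) : (Fm v c).trace = ∑ i, c i := by
  rw [Matrix.trace]
  simp only [Matrix.diag_apply, Fm_apply]
  rw [Finset.sum_comm]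
  refine Finset.sum_congr rfl fun i _ => ?_
  rw [← Finset.mul_sum, hv i i]
  simp

lemma Fm_one : Fm v 1 = (1 : Matrix (Fin p) (Fin p) ℝ) := by
  have hVVt : (Matrix.of v) * (Matrix.of v)ᵀ = 1 := by
    ext i j
    simp [Matrix.mul_apply, hv i j, Matrix.one_apply]
  have hVtV : (Matrix.of v)ᵀ * (Matrix.of v) = 1 := mul_eq_one_comm.mp hVVt
  ext j k
  rw [Fm_apply]
  have := congrFun (congrFun hVtV j) k
  rw [Matrix.mul_apply] at this
  simpa [Matrix.one_apply, mul_comm] using this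
end ortho

lemma Fm_herm (v : Fin p → (Fin p → ℝ)) (c : Fin p → ℝ) : (Fm v c).IsHermitian := by
  rw [Matrix.IsHermitian, Matrix.conjTranspose_eq_transpose_of_trivial]
  ext j k
  rw [Matrix.transpose_apply, Fm_apply, Fm_apply]
  exact Finset.sum_congr rfl fun i _ => by ring

lemma Fm_psd (v : Fin p → (Fin p → ℝ)) (c : Fin p → ℝ) (hc : ∀ i, 0 ≤ c i) :
    (Fm v c).PosSemidef := by
  refine Matrix.PosSemidef.of_dotProduct_mulVec_nonneg (Fm_herm v c) fun x => ?_
  have : (star x) ⬝ᵥ ((Fm v c) *ᵥ x) = ∑ i, c i * (∑ k, v i k * x k) ^ 2 := by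
    simp only [dotProduct, Matrix.mulVec, star_trivial, Fm_apply]
    have inner : ∀ j l : Fin p, x j * ((∑ i, c i * (v i j * v i l)) * x l)
        = ∑ i, c i * ((v i j * x j) * (v i l * x l)) := by
      intro j l
      rw [Finset.sum_mul, Finset.mul_sum]
      exact Finset.sum_congr rfl fun i _ => by ring
    calc ∑ j, x j * ∑ l, (∑ i, c i * (v i j * v i l)) * x l
        = ∑ j, ∑ l, ∑ i, c i * ((v i j * x j) * (v i l * x l)) := by
          refine Finset.sum_congr rfl fun j _ => ?_
          rw [Finset.mul_sum]
          exact Finset.sum_congr rfl fun l _ => inner j l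
      _ = ∑ j, ∑ i, ∑ l, c i * ((v i j * x j) * (v i l * x l)) := by
          exact Finset.sum_congr rfl fun j _ => Finset.sum_comm
      _ = ∑ i, ∑ j, ∑ l, c i * ((v i j * x j) * (v i l * x l)) := Finset.sum_comm
      _ = ∑ i, c i * (∑ k, v i k * x k) ^ 2 := by
          refine Finset.sum_congr rfl fun i _ => ?_
          rw [sq, Finset.sum_mul_sum, Finset.mul_sum]
          refine Finset.sum_congr rfl fun j _ => ?_
          rw [Finset.mul_sum]
  rw [this]
  exact Finset.sum_nonneg fun i _ => mul_nonneg (hc i) (sq_nonneg _)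

/-- Projection onto the PSD cone in nuclear norm: truncating negative eigenvalues
of a symmetric matrix minimizes the nuclear-norm distance over PSD matrices. -/
theorem stmt_4 {p : ℕ}
    (lam : Fin p → ℝ) (hlam : Antitone lam)
    (v : Fin p → (Fin p → ℝ))
    (hv : ∀ i j, ∑ k, v i k * v j k = if i = j then (1 : ℝ) else 0)
    (A : Matrix (Fin p) (Fin p) ℝ)
    (hA : A = ∑ i, lam i • Matrix.vecMulVec (v i) (v i))
    (A₀ : Matrix (Fin p) (Fin p) ℝ)
    (hA₀ : A₀ = ∑ i, max (lam i) 0 • Matrix.vecMulVec (v i) (v i)) :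
    ∀ X : Matrix (Fin p) (Fin p) ℝ, X.PosSemidef → nuc (A - A₀) ≤ nuc (A - X) := by
  intro X hX
  classical
  have hpsdM : ∀ M : Matrix (Fin p) (Fin p) ℝ, (Mᵀ * M).PosSemidef := by
    intro M
    have := Matrix.posSemidef_conjTranspose_mul_self M
    rwa [Matrix.conjTranspose_eq_transpose_of_trivial] at this
  have hnuc : ∀ (M : Matrix (Fin p) (Fin p) ℝ) (h : (Mᵀ * M).PosSemidef),
      nuc M = h.sqrt.trace := by
    intro M h
    rw [trace_sqrt_eq]
    rfl
  have hAF : A = Fm v lam := hA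
  have hA₀F : A₀ = Fm v (fun i => max (lam i) 0) := hA₀
  have Fm_sub : ∀ c d : Fin p → ℝ, Fm v (fun i => c i - d i) = Fm v c - Fm v d := by
    intro c d
    simp [Fm, sub_smul, Finset.sum_sub_distrib]
  have htransp : ∀ c : Fin p → ℝ, (Fm v c)ᵀ = Fm v c := by
    intro c
    have := (Fm_herm v c).eq
    rwa [Matrix.conjTranspose_eq_transpose_of_trivial] at this
  -- the residual A - A₀
  set m : Fin p → ℝ := fun i => lam i - max (lam i) 0 with hm
  set a : Fin p → ℝ := fun i => max (-(lam i)) 0 with ha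
  have hM₀ : A - A₀ = Fm v m := by
    rw [hAF, hA₀F, ← Fm_sub]
  have hpsd₀ : ((A - A₀)ᵀ * (A - A₀)).PosSemidef := hpsdM _
  have hMM : (A - A₀)ᵀ * (A - A₀) = Fm v (fun i => m i * m i) := by
    rw [hM₀, htransp, Fm_mul hv]
  have hsqrt₀ : hpsd₀.sqrt = Fm v a := by
    symm
    apply Matrix.PosSemidef.eq_sqrt_of_sq_eq
      (Fm_psd v a (fun i => le_max_right _ _))
    have hfun : (fun i => a i * a i) = fun i => m i * m i := by
      funext i
      simp only [hm, ha]
      rcases le_total (lam i) 0 with h | h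
      · rw [max_eq_left (neg_nonneg.mpr h), max_eq_right h]
        ring
      · rw [max_eq_right (neg_nonpos.mpr h), max_eq_left h]
        ring
    rw [pow_two, Fm_mul hv, hMM]
    exact congrArg (Fm v) hfun
  have hn₀ : nuc (A - A₀) = ∑ i, a i := by
    rw [hnuc _ hpsd₀, hsqrt₀, Fm_trace hv]
  -- the projection matrix P
  set c : Fin p → ℝ := fun i => if lam i < 0 then 1 else 0 with hc
  set P : Matrix (Fin p) (Fin p) ℝ := Fm v c with hP
  have hPpsd : P.PosSemidef := Fm_psd v c (fun i => by
    simp only [hc]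
    split <;> norm_num)
  have h1P : ((1 : Matrix (Fin p) (Fin p) ℝ) - P).PosSemidef := by
    have h1 : (1 : Matrix (Fin p) (Fin p) ℝ) - P = Fm v (fun i => 1 - c i) := by
      rw [Fm_sub, show (Fm v fun _ => (1 : ℝ)) = Fm v 1 from rfl, Fm_one hv]
    rw [h1]
    refine Fm_psd v _ (fun i => ?_)
    simp only [hc]
    split <;> norm_num
  -- the minimand A - X
  have hMher : (A - X).IsHermitian := by
    have hAher : A.IsHermitian := hAF ▸ Fm_herm v lam
    exact hAher.sub hX.1
  have hpsdX : ((A - X)ᵀ * (A - X)).PosSemidef := hpsdM _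
  have habs : (hpsdX.sqrt + (A - X)).PosSemidef := sqrt_add_self_psd hMher hpsdX
  set S : Matrix (Fin p) (Fin p) ℝ := hpsdX.sqrt with hS
  -- key trace inequality
  have key : -(((A - X) * P).trace) ≤ S.trace := by
    have k1 : 0 ≤ ((S + (A - X)) * P).trace := trace_mul_psd_nonneg habs hPpsd
    have k2 : 0 ≤ (S * (1 - P)).trace := trace_mul_psd_nonneg hpsdX.posSemidef_sqrt h1P
    rw [add_mul, Matrix.trace_add] at k1
    rw [mul_sub, mul_one, Matrix.trace_sub] at k2
    linarith
  -- trace computations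
  have hAP : (A * P).trace = ∑ i, lam i * c i := by
    rw [hAF, hP, Fm_mul hv, Fm_trace hv]
  have hXP : 0 ≤ (X * P).trace := trace_mul_psd_nonneg hX hPpsd
  have hMP : ((A - X) * P).trace = (A * P).trace - (X * P).trace := by
    rw [sub_mul, Matrix.trace_sub]
  -- compare the two sides
  have hlow : ∑ i, a i ≤ -(((A - X) * P).trace) := by
    have : ∑ i, a i = -∑ i, lam i * c i := by
      rw [← Finset.sum_neg_distrib]
      refine Finset.sum_congr rfl fun i _ => ?_
      simp only [ha, hc]
      split
      · rw [max_eq_left]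
        · ring
        · next h => linarith
      · rw [max_eq_right]
        · ring
        · next h => linarith [not_lt.mp h]
    rw [this, hMP, hAP]
    linarith
  rw [hn₀, hnuc _ hpsdX]
  calc ∑ i, a i ≤ -(((A - X) * P).trace) := hlow
    _ ≤ S.trace := key
end
end

section
/- Let Xᵗ, X̄ ∈ ℝ^{p₁×p₂} be rank-r matrices with left/right singular-vector matrices (Uᵗ, Vᵗ) and (Ū, V̄) respectively. Define the orthogonal projectors P_{Xᵗ}(Z) = P_{Uᵗ} Z P_{Vᵗ} + P_{Uᵗ⊥} Z P_{Vᵗ} + P_{Uᵗ} Z P_{Vᵗ⊥} and P_{X̄}(Z) analogously. Then the operator norm of (P_{Xᵗ} − P_{X̄}) with respect to the Frobenius norm is at most 2‖Xᵗ − X̄‖ / σ_r(X̄). -/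
open Matrix
noncomputable section

namespace StmtAux
variable {m n k : ℕ}

lemma dot_nonneg (x : Fin n → ℝ) : 0 ≤ x ⬝ᵥ x :=
  Finset.sum_nonneg fun i _ => mul_self_nonneg _

lemma norm_sq_eq (x : EuclideanSpace ℝ (Fin n)) :
    ‖x‖^2 = (fun i => x i) ⬝ᵥ (fun i => x i) := by
  rw [EuclideanSpace.norm_eq, Real.sq_sqrt (by positivity)]
  simp [dotProduct, Real.norm_eq_abs, sq_abs, sq]

lemma norm_lin_sq (A : Matrix (Fin m) (Fin n) ℝ) (x : EuclideanSpace ℝ (Fin n)) :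
    ‖Matrix.toEuclideanLin A x‖^2 = (A *ᵥ (fun i => x i)) ⬝ᵥ (A *ᵥ (fun i => x i)) := by
  rw [norm_sq_eq]; rfl

lemma spec_nonneg (A : Matrix (Fin m) (Fin n) ℝ) : 0 ≤ spec A := norm_nonneg _

lemma dot_AB (A : Matrix (Fin m) (Fin n) ℝ) (B : Matrix (Fin m) (Fin k) ℝ)
    (x : Fin n → ℝ) (y : Fin k → ℝ) :
    (A *ᵥ x) ⬝ᵥ (B *ᵥ y) = x ⬝ᵥ ((Aᵀ * B) *ᵥ y) := by
  conv_rhs => rw [← mulVec_mulVec, dotProduct_mulVec, vecMul_transpose]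

lemma spec_le_of_sq {A : Matrix (Fin m) (Fin n) ℝ} {c : ℝ} (hc : 0 ≤ c)
    (h : ∀ x : Fin n → ℝ, (A *ᵥ x) ⬝ᵥ (A *ᵥ x) ≤ c^2 * (x ⬝ᵥ x)) : spec A ≤ c := by
  apply ContinuousLinearMap.opNorm_le_bound _ hc
  intro x
  have h2 : ‖Matrix.toEuclideanLin A x‖^2 ≤ (c * ‖x‖)^2 := by
    rw [norm_lin_sq, mul_pow, norm_sq_eq]; exact h _
  have h3 := Real.sqrt_le_sqrt h2
  rwa [Real.sqrt_sq (norm_nonneg _), Real.sqrt_sq (by positivity)] at h3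

lemma sq_le_spec (A : Matrix (Fin m) (Fin n) ℝ) (x : Fin n → ℝ) :
    (A *ᵥ x) ⬝ᵥ (A *ᵥ x) ≤ (spec A)^2 * (x ⬝ᵥ x) := by
  set y : EuclideanSpace ℝ (Fin n) := (WithLp.equiv 2 _).symm x with hy
  have hx : (fun i => y i) = x := rfl
  have h2 : ‖Matrix.toEuclideanLin A y‖ ≤ spec A * ‖y‖ :=
    (LinearMap.toContinuousLinearMap (Matrix.toEuclideanLin A)).le_opNorm y
  have h3 : ‖Matrix.toEuclideanLin A y‖^2 ≤ (spec A * ‖y‖)^2 :=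
    pow_le_pow_left₀ (norm_nonneg _) h2 2
  rw [norm_lin_sq, mul_pow, hx, norm_sq_eq, hx] at h3
  exact h3

lemma sq_le_of_spec_le {A : Matrix (Fin m) (Fin n) ℝ} {c : ℝ} (h : spec A ≤ c)
    (x : Fin n → ℝ) : (A *ᵥ x) ⬝ᵥ (A *ᵥ x) ≤ c^2 * (x ⬝ᵥ x) :=
  le_trans (sq_le_spec A x)
    (mul_le_mul_of_nonneg_right (pow_le_pow_left₀ (spec_nonneg _) h 2) (dot_nonneg x))

section L2
open scoped Matrix.Norms.L2Operator

lemma spec_eq_norm (A : Matrix (Fin m) (Fin n) ℝ) : spec A = ‖A‖ := rfl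

lemma spec_transpose (A : Matrix (Fin m) (Fin n) ℝ) : spec Aᵀ = spec A := by
  rw [spec_eq_norm, spec_eq_norm, ← Matrix.conjTranspose_eq_transpose_of_trivial,
    Matrix.l2_opNorm_conjTranspose]

lemma spec_mul_le (A : Matrix (Fin m) (Fin n) ℝ) (B : Matrix (Fin n) (Fin k) ℝ) :
    spec (A * B) ≤ spec A * spec B := by
  rw [spec_eq_norm, spec_eq_norm, spec_eq_norm]; exact Matrix.l2_opNorm_mul A B

lemma spec_sub_rev (A B : Matrix (Fin m) (Fin n) ℝ) : spec (A - B) = spec (B - A) := by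
  rw [spec_eq_norm, spec_eq_norm]; exact norm_sub_rev _ _

lemma proj_spec_le_one {P : Matrix (Fin n) (Fin n) ℝ} (hP : Pᵀ * P = P) : spec P ≤ 1 := by
  have h := Matrix.l2_opNorm_conjTranspose_mul_self P
  rw [Matrix.conjTranspose_eq_transpose_of_trivial, hP] at h
  rw [spec_eq_norm]
  nlinarith [norm_nonneg (E := Matrix (Fin n) (Fin n) ℝ) P]
end L2

lemma isometry_spec_le_one {A : Matrix (Fin m) (Fin n) ℝ} (hA : Aᵀ * A = 1) : spec A ≤ 1 :=
  spec_le_of_sq zero_le_one fun x => by rw [dot_AB, hA, one_mulVec, one_pow, one_mul]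

lemma spec_diagonal_le {d : Fin n → ℝ} {c : ℝ} (hc : 0 ≤ c) (hd : ∀ i, |d i| ≤ c) :
    spec (Matrix.diagonal d) ≤ c := by
  apply spec_le_of_sq hc
  intro x
  simp only [dotProduct, mulVec_diagonal, Finset.mul_sum]
  apply Finset.sum_le_sum
  intro i _
  have h1 : d i * x i * (d i * x i) = (d i)^2 * (x i * x i) := by ring
  have h2 : (d i)^2 ≤ c^2 := by
    rw [← sq_abs]; exact pow_le_pow_left₀ (abs_nonneg _) (hd i) 2
  rw [h1]
  exact mul_le_mul_of_nonneg_right h2 (mul_self_nonneg _)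

lemma proj_symm {P : Matrix (Fin n) (Fin n) ℝ} (hP : Pᵀ * P = P) : Pᵀ = P := by
  have h2 := congrArg Matrix.transpose hP
  rw [Matrix.transpose_mul, Matrix.transpose_transpose, hP] at h2
  exact h2.symm

lemma proj_idem {P : Matrix (Fin n) (Fin n) ℝ} (hP : Pᵀ * P = P) : P * P = P := by
  nth_rewrite 1 [← proj_symm hP]; exact hP

lemma projP {U : Matrix (Fin m) (Fin n) ℝ} (hU : Uᵀ * U = 1) :
    (U * Uᵀ)ᵀ * (U * Uᵀ) = U * Uᵀ := by
  rw [Matrix.transpose_mul, Matrix.transpose_transpose, Matrix.mul_assoc,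
    ← Matrix.mul_assoc Uᵀ U Uᵀ, hU, Matrix.one_mul]

lemma projC {P : Matrix (Fin n) (Fin n) ℝ} (hP : Pᵀ * P = P) :
    (1 - P)ᵀ * (1 - P) = 1 - P := by
  have hs := proj_symm hP
  have hpp := proj_idem hP
  rw [Matrix.transpose_sub, Matrix.transpose_one, hs]
  simp only [Matrix.sub_mul, Matrix.mul_sub, Matrix.one_mul, Matrix.mul_one, hpp]
  abel

lemma proj_pyth {P : Matrix (Fin n) (Fin n) ℝ} (hP : Pᵀ * P = P) (x : Fin n → ℝ) :
    (P *ᵥ x) ⬝ᵥ (P *ᵥ x) + ((1 - P) *ᵥ x) ⬝ᵥ ((1 - P) *ᵥ x) = x ⬝ᵥ x := by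
  rw [dot_AB, hP, dot_AB, projC hP]
  simp [sub_mulVec, one_mulVec, dotProduct_sub]


lemma projdiff {P Q : Matrix (Fin n) (Fin n) ℝ} (hP : Pᵀ * P = P) (hQ : Qᵀ * Q = Q)
    {s : ℝ} (hs : 0 ≤ s) (h1 : spec (P * (1 - Q)) ≤ s) (h2 : spec ((1 - P) * Q) ≤ s) :
    spec (P - Q) ≤ s := by
  have hpp := proj_idem hP
  have hqq := proj_idem hQ
  apply spec_le_of_sq hs
  intro x
  have e1 : P *ᵥ ((P - Q) *ᵥ x) = (P * (1 - Q)) *ᵥ ((1 - Q) *ᵥ x) := by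
    rw [mulVec_mulVec, mulVec_mulVec]
    congr 1
    simp only [Matrix.mul_sub, Matrix.sub_mul, Matrix.mul_one, Matrix.one_mul, hpp]
    rw [Matrix.mul_assoc, hqq]
    abel
  have e2 : (1 - P) *ᵥ ((P - Q) *ᵥ x) = -(((1 - P) * Q) *ᵥ (Q *ᵥ x)) := by
    rw [mulVec_mulVec, mulVec_mulVec, ← Matrix.neg_mulVec]
    congr 1
    simp only [Matrix.mul_sub, Matrix.sub_mul, Matrix.mul_one, Matrix.one_mul, hpp]
    rw [Matrix.mul_assoc, hqq]
    abel
  have hpyth := proj_pyth hP ((P - Q) *ᵥ x)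
  rw [e1, e2, dotProduct_neg, neg_dotProduct, neg_neg] at hpyth
  have b1 := sq_le_of_spec_le h1 ((1 - Q) *ᵥ x)
  have b2 := sq_le_of_spec_le h2 (Q *ᵥ x)
  have hq := proj_pyth hQ x
  nlinarith [dot_nonneg ((P - Q) *ᵥ x)]

lemma sym {U V : Matrix (Fin m) (Fin n) ℝ} (hU : Uᵀ * U = 1) (hV : Vᵀ * V = 1) :
    spec ((1 - V * Vᵀ) * (U * Uᵀ)) ≤ spec ((1 - U * Uᵀ) * (V * Vᵀ)) := by
  set s := spec ((1 - U * Uᵀ) * (V * Vᵀ)) with hsdef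
  have hs0 : 0 ≤ s := spec_nonneg _
  by_cases hcase : 1 ≤ s
  · calc spec ((1 - V * Vᵀ) * (U * Uᵀ)) ≤ spec (1 - V * Vᵀ) * spec (U * Uᵀ) := spec_mul_le _ _
      _ ≤ 1 * 1 := mul_le_mul (proj_spec_le_one (projC (projP hV)))
          (proj_spec_le_one (projP hU)) (spec_nonneg _) zero_le_one
      _ = 1 := one_mul 1
      _ ≤ s := hcase
  · push_neg at hcase
    have ht : 0 < 1 - s^2 := by nlinarith
    set W : Matrix (Fin n) (Fin n) ℝ := Uᵀ * V with hW
    have step1 : ∀ x : Fin n → ℝ, (1 - s^2) * (x ⬝ᵥ x) ≤ (W *ᵥ x) ⬝ᵥ (W *ᵥ x) := by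
      intro x
      have hb := sq_le_of_spec_le (le_of_eq hsdef.symm) (V *ᵥ x)
      have hv1 : (V *ᵥ x) ⬝ᵥ (V *ᵥ x) = x ⬝ᵥ x := by rw [dot_AB, hV, one_mulVec]
      have hm : ((1 - U * Uᵀ) * (V * Vᵀ)) *ᵥ (V *ᵥ x) = ((1 - U * Uᵀ) * V) *ᵥ x := by
        rw [mulVec_mulVec]
        congr 1
        rw [Matrix.mul_assoc, Matrix.mul_assoc, hV, Matrix.mul_one]
      have hid : ((1 - U * Uᵀ) * V)ᵀ * ((1 - U * Uᵀ) * V) = 1 - Wᵀ * W := by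
        calc ((1 - U * Uᵀ) * V)ᵀ * ((1 - U * Uᵀ) * V)
            = Vᵀ * (((1 - U * Uᵀ)ᵀ * (1 - U * Uᵀ)) * V) := by
              rw [Matrix.transpose_mul, Matrix.mul_assoc, Matrix.mul_assoc]
          _ = Vᵀ * ((1 - U * Uᵀ) * V) := by rw [projC (projP hU)]
          _ = 1 - Wᵀ * W := by
              rw [Matrix.sub_mul, Matrix.one_mul, Matrix.mul_sub, hV, hW,
                Matrix.transpose_mul, Matrix.transpose_transpose]
              congr 1
              rw [Matrix.mul_assoc U, Matrix.mul_assoc Vᵀ]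
      have hdot : (((1 - U * Uᵀ) * V) *ᵥ x) ⬝ᵥ (((1 - U * Uᵀ) * V) *ᵥ x)
          = x ⬝ᵥ x - (W *ᵥ x) ⬝ᵥ (W *ᵥ x) := by
        rw [dot_AB, hid, sub_mulVec, one_mulVec, dotProduct_sub, dot_AB]
      rw [hv1, hm, hdot] at hb
      linarith
    -- W is invertible
    have hinj : Function.Injective (W.mulVec) := by
      intro a b hab
      have hz : W *ᵥ (a - b) = 0 := by rw [mulVec_sub, hab, sub_self]
      have h1 := step1 (a - b)
      rw [hz] at h1
      have h2 : (0 : Fin n → ℝ) ⬝ᵥ 0 = 0 := zero_dotProduct 0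
      rw [h2] at h1
      have h3 : (a - b) ⬝ᵥ (a - b) = 0 :=
        le_antisymm (by nlinarith [dot_nonneg (a - b)]) (dot_nonneg (a - b))
      have h4 : a - b = 0 := dotProduct_self_eq_zero.mp h3
      exact sub_eq_zero.mp h4
    have hunit : IsUnit W := Matrix.mulVec_injective_iff_isUnit.mp hinj
    have hdet : IsUnit W.det := Matrix.isUnit_iff_isUnit_det W |>.mp hunit
    have hWinv : W * W⁻¹ = 1 := Matrix.mul_nonsing_inv W hdet
    have hspecinv : spec W⁻¹ ≤ (Real.sqrt (1 - s^2))⁻¹ := by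
      apply spec_le_of_sq (by positivity)
      intro x
      have h1 := step1 (W⁻¹ *ᵥ x)
      rw [mulVec_mulVec, hWinv, one_mulVec] at h1
      have h2 : ((Real.sqrt (1 - s^2))⁻¹)^2 = (1 - s^2)⁻¹ := by
        rw [← Real.sqrt_sq (le_of_lt ht)]
        rw [Real.sqrt_sq (le_of_lt ht), ← one_div, div_pow, one_pow, Real.sq_sqrt (le_of_lt ht), one_div]
      rw [h2]
      have h4 := mul_le_mul_of_nonneg_left h1 (le_of_lt (inv_pos.mpr ht))
      rwa [← mul_assoc, inv_mul_cancel₀ (ne_of_gt ht), one_mul] at h4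
    have step3 : ∀ y : Fin n → ℝ, (1 - s^2) * (y ⬝ᵥ y) ≤ (Wᵀ *ᵥ y) ⬝ᵥ (Wᵀ *ᵥ y) := by
      intro y
      have hy : y = (W⁻¹)ᵀ *ᵥ (Wᵀ *ᵥ y) := by
        rw [mulVec_mulVec, ← Matrix.transpose_mul, hWinv, Matrix.transpose_one, one_mulVec]
      have hb : ((W⁻¹)ᵀ *ᵥ (Wᵀ *ᵥ y)) ⬝ᵥ ((W⁻¹)ᵀ *ᵥ (Wᵀ *ᵥ y))
          ≤ ((Real.sqrt (1 - s^2))⁻¹)^2 * ((Wᵀ *ᵥ y) ⬝ᵥ (Wᵀ *ᵥ y)) := by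
        apply sq_le_of_spec_le
        rw [spec_transpose]; exact hspecinv
      rw [← hy] at hb
      have h2 : ((Real.sqrt (1 - s^2))⁻¹)^2 = (1 - s^2)⁻¹ := by
        rw [← one_div, div_pow, one_pow, Real.sq_sqrt (le_of_lt ht), one_div]
      rw [h2] at hb
      have h3 : (1 - s^2) * (y ⬝ᵥ y) ≤ (1 - s^2) * ((1 - s^2)⁻¹ * ((Wᵀ *ᵥ y) ⬝ᵥ (Wᵀ *ᵥ y))) :=
        mul_le_mul_of_nonneg_left hb (le_of_lt ht)
      rwa [← mul_assoc, mul_inv_cancel₀ (ne_of_gt ht), one_mul] at h3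
    -- final bound
    apply spec_le_of_sq hs0
    intro z
    have hm2 : ((1 - V * Vᵀ) * (U * Uᵀ)) *ᵥ z = ((1 - V * Vᵀ) * U) *ᵥ (Uᵀ *ᵥ z) := by
      rw [mulVec_mulVec]
      congr 1
      rw [Matrix.mul_assoc]
    set w : Fin n → ℝ := Uᵀ *ᵥ z with hw
    have hid2 : ((1 - V * Vᵀ) * U)ᵀ * ((1 - V * Vᵀ) * U) = 1 - W * Wᵀ := by
      calc ((1 - V * Vᵀ) * U)ᵀ * ((1 - V * Vᵀ) * U)
          = Uᵀ * (((1 - V * Vᵀ)ᵀ * (1 - V * Vᵀ)) * U) := by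
            rw [Matrix.transpose_mul, Matrix.mul_assoc, Matrix.mul_assoc]
        _ = Uᵀ * ((1 - V * Vᵀ) * U) := by rw [projC (projP hV)]
        _ = 1 - W * Wᵀ := by
            rw [Matrix.sub_mul, Matrix.one_mul, Matrix.mul_sub, hU, hW,
              Matrix.transpose_mul, Matrix.transpose_transpose]
            congr 1
            rw [Matrix.mul_assoc V, Matrix.mul_assoc Uᵀ]
    have hdot2 : (((1 - V * Vᵀ) * U) *ᵥ w) ⬝ᵥ (((1 - V * Vᵀ) * U) *ᵥ w)
        = w ⬝ᵥ w - (Wᵀ *ᵥ w) ⬝ᵥ (Wᵀ *ᵥ w) := by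
      rw [dot_AB, hid2, sub_mulVec, one_mulVec, dotProduct_sub,
        dot_AB Wᵀ Wᵀ w w, Matrix.transpose_transpose]
    have hww : w ⬝ᵥ w ≤ z ⬝ᵥ z := by
      have hUle : spec Uᵀ ≤ 1 := by rw [spec_transpose]; exact isometry_spec_le_one hU
      have h5 := sq_le_of_spec_le hUle z
      rwa [one_pow, one_mul] at h5
    have h3 := step3 w
    rw [hm2, hdot2]
    have e := mul_le_mul_of_nonneg_left hww (sq_nonneg s)
    linarith

section FrobA
attribute [local instance] Matrix.frobeniusSeminormedAddCommGroup

lemma frob_eq_norm (A : Matrix (Fin m) (Fin n) ℝ) : frob A = ‖A‖ := by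
  rw [Matrix.frobenius_norm_def, frob, Real.sqrt_eq_rpow]
  congr 1
  apply Finset.sum_congr rfl
  intro i _
  apply Finset.sum_congr rfl
  intro j _
  rw [show ((2:ℝ) = ((2:ℕ):ℝ)) by norm_num, Real.rpow_natCast]
  rw [Real.norm_eq_abs, sq_abs]

lemma frob_add_le (A B : Matrix (Fin m) (Fin n) ℝ) : frob (A + B) ≤ frob A + frob B := by
  rw [frob_eq_norm, frob_eq_norm, frob_eq_norm]; exact norm_add_le A B

lemma frob_transpose (A : Matrix (Fin m) (Fin n) ℝ) : frob Aᵀ = frob A := by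
  rw [frob_eq_norm, frob_eq_norm]; exact Matrix.frobenius_norm_transpose A

end FrobA

lemma frob_nonneg (A : Matrix (Fin m) (Fin n) ℝ) : 0 ≤ frob A := Real.sqrt_nonneg _

lemma frob_sq (A : Matrix (Fin m) (Fin n) ℝ) :
    (frob A)^2 = ∑ j, (fun i => A i j) ⬝ᵥ (fun i => A i j) := by
  rw [frob, Real.sq_sqrt (by positivity), Finset.sum_comm]
  apply Finset.sum_congr rfl
  intro j _
  simp [dotProduct, sq]

lemma frob_mul_le_left (A : Matrix (Fin m) (Fin n) ℝ) (Z : Matrix (Fin n) (Fin k) ℝ) :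
    frob (A * Z) ≤ spec A * frob Z := by
  have hsq : (frob (A * Z))^2 ≤ (spec A * frob Z)^2 := by
    rw [frob_sq, mul_pow, frob_sq, Finset.mul_sum]
    apply Finset.sum_le_sum
    intro j _
    have hcol : (fun i => (A * Z) i j) = A *ᵥ (fun l => Z l j) := by
      funext i; simp [Matrix.mul_apply, Matrix.mulVec, dotProduct]
    rw [hcol]
    exact sq_le_spec A _
  have h3 := Real.sqrt_le_sqrt hsq
  rwa [Real.sqrt_sq (frob_nonneg _),
    Real.sqrt_sq (mul_nonneg (spec_nonneg _) (frob_nonneg _))] at h3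

lemma frob_mul_le_right (Z : Matrix (Fin m) (Fin n) ℝ) (B : Matrix (Fin n) (Fin k) ℝ) :
    frob (Z * B) ≤ frob Z * spec B := by
  rw [← frob_transpose (Z * B), Matrix.transpose_mul]
  calc frob (Bᵀ * Zᵀ) ≤ spec Bᵀ * frob Zᵀ := frob_mul_le_left _ _
    _ = frob Z * spec B := by rw [spec_transpose, frob_transpose, mul_comm]

end StmtAux

open StmtAux in
/-- The difference of tangent-space projectors at rank-r matrices Xᵗ and X̄ has
Frobenius-operator norm at most 2‖Xᵗ − X̄‖ / σ_r(X̄). -/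
theorem stmt_8 {p₁ p₂ r : ℕ} (hr : 0 < r)
    (Xt Xb : Matrix (Fin p₁) (Fin p₂) ℝ)
    (Ut Ub : Matrix (Fin p₁) (Fin r) ℝ) (Vt Vb : Matrix (Fin p₂) (Fin r) ℝ)
    (St : Matrix (Fin r) (Fin r) ℝ) (σb : Fin r → ℝ)
    (hXt : Xt = Ut * St * Vtᵀ) (hXb : Xb = Ub * Matrix.diagonal σb * Vbᵀ)
    (hUt : Utᵀ * Ut = 1) (hUb : Ubᵀ * Ub = 1)
    (hVt : Vtᵀ * Vt = 1) (hVb : Vbᵀ * Vb = 1)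
    (hσb : Antitone σb) (hσbpos : ∀ i, 0 < σb i)
    (hrankt : Xt.rank = r) (hrankb : Xb.rank = r)
    (P₁ P₂ : Matrix (Fin p₁) (Fin p₂) ℝ → Matrix (Fin p₁) (Fin p₂) ℝ)
    (hP₁ : ∀ Z, P₁ Z = Ut * Utᵀ * Z * (Vt * Vtᵀ) + (1 - Ut * Utᵀ) * Z * (Vt * Vtᵀ)
        + Ut * Utᵀ * Z * (1 - Vt * Vtᵀ))
    (hP₂ : ∀ Z, P₂ Z = Ub * Ubᵀ * Z * (Vb * Vbᵀ) + (1 - Ub * Ubᵀ) * Z * (Vb * Vbᵀ)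
        + Ub * Ubᵀ * Z * (1 - Vb * Vbᵀ)) :
    ∀ Z : Matrix (Fin p₁) (Fin p₂) ℝ,
      frob (P₁ Z - P₂ Z) ≤
        2 * spec (Xt - Xb) / σb ⟨r - 1, Nat.sub_lt hr one_pos⟩ * frob Z := by
  intro Z
  have hσr : 0 < σb ⟨r - 1, Nat.sub_lt hr one_pos⟩ := hσbpos _
  set σr : ℝ := σb ⟨r - 1, Nat.sub_lt hr one_pos⟩ with hσrdef
  set δ : ℝ := spec (Xt - Xb) / σr with hδdef
  have hδ0 : 0 ≤ δ := div_nonneg (spec_nonneg _) (le_of_lt hσr)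
  set Dinv : Matrix (Fin r) (Fin r) ℝ := Matrix.diagonal (fun i => (σb i)⁻¹) with hDinvdef
  -- basic cancellation helpers
  have hUt' : ∀ {k : ℕ} (X : Matrix (Fin r) (Fin k) ℝ), Utᵀ * (Ut * X) = X := by
    intro k X; rw [← Matrix.mul_assoc, hUt, Matrix.one_mul]
  have hUb' : ∀ {k : ℕ} (X : Matrix (Fin r) (Fin k) ℝ), Ubᵀ * (Ub * X) = X := by
    intro k X; rw [← Matrix.mul_assoc, hUb, Matrix.one_mul]
  have hVt' : ∀ {k : ℕ} (X : Matrix (Fin r) (Fin k) ℝ), Vtᵀ * (Vt * X) = X := by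
    intro k X; rw [← Matrix.mul_assoc, hVt, Matrix.one_mul]
  have hVb' : ∀ {k : ℕ} (X : Matrix (Fin r) (Fin k) ℝ), Vbᵀ * (Vb * X) = X := by
    intro k X; rw [← Matrix.mul_assoc, hVb, Matrix.one_mul]
  have hDDi : Matrix.diagonal σb * Dinv = 1 := by
    rw [hDinvdef, Matrix.diagonal_mul_diagonal]
    rw [show ((fun i => σb i * (σb i)⁻¹) = fun _ => (1:ℝ)) from
      funext fun i => mul_inv_cancel₀ (ne_of_gt (hσbpos i))]
    exact Matrix.diagonal_one
  have hDiD : Dinv * Matrix.diagonal σb = 1 := by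
    rw [hDinvdef, Matrix.diagonal_mul_diagonal]
    rw [show ((fun i => (σb i)⁻¹ * σb i) = fun _ => (1:ℝ)) from
      funext fun i => inv_mul_cancel₀ (ne_of_gt (hσbpos i))]
    exact Matrix.diagonal_one
  have hDDi' : ∀ {k : ℕ} (X : Matrix (Fin r) (Fin k) ℝ),
      Matrix.diagonal σb * (Dinv * X) = X := by
    intro k X; rw [← Matrix.mul_assoc, hDDi, Matrix.one_mul]
  have hDiD' : ∀ {k : ℕ} (X : Matrix (Fin r) (Fin k) ℝ),
      Dinv * (Matrix.diagonal σb * X) = X := by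
    intro k X; rw [← Matrix.mul_assoc, hDiD, Matrix.one_mul]
  -- key matrix identities
  have hXbG : Xb * (Vb * Dinv * Ubᵀ) = Ub * Ubᵀ := by
    rw [hXb]
    simp only [Matrix.mul_assoc]
    rw [hVb', hDDi']
  have hGXb : (Vb * Dinv * Ubᵀ) * Xb = Vb * Vbᵀ := by
    rw [hXb]
    simp only [Matrix.mul_assoc]
    rw [hUb', hDiD']
  have hPuXt : (1 - Ut * Utᵀ) * Xt = 0 := by
    rw [hXt, Matrix.sub_mul, Matrix.one_mul]
    simp only [Matrix.mul_assoc]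
    rw [hUt', sub_self]
  have hXtPv : Xt * (1 - Vt * Vtᵀ) = 0 := by
    rw [hXt, Matrix.mul_sub, Matrix.mul_one]
    simp only [Matrix.mul_assoc]
    rw [hVt', sub_self]
  -- spectral bound on G
  have hspecDinv : spec Dinv ≤ σr⁻¹ := by
    apply spec_diagonal_le (by positivity)
    intro i
    rw [abs_of_pos (inv_pos.mpr (hσbpos i))]
    have hle : σr ≤ σb i := by
      rw [hσrdef]
      apply hσb
      exact Fin.mk_le_of_le_val (Nat.le_pred_of_lt i.isLt)
    exact inv_anti₀ hσr hle
  have hspecG : spec (Vb * Dinv * Ubᵀ) ≤ σr⁻¹ := by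
    have hUbT : spec Ubᵀ ≤ 1 := by rw [spec_transpose]; exact isometry_spec_le_one hUb
    calc spec (Vb * Dinv * Ubᵀ) ≤ spec (Vb * Dinv) * spec Ubᵀ := spec_mul_le _ _
      _ ≤ (spec Vb * spec Dinv) * 1 := by
          apply mul_le_mul (spec_mul_le _ _) hUbT (spec_nonneg _)
            (mul_nonneg (spec_nonneg _) (spec_nonneg _))
      _ ≤ (1 * σr⁻¹) * 1 := by
          apply mul_le_mul_of_nonneg_right _ zero_le_one
          exact mul_le_mul (isometry_spec_le_one hVb) hspecDinv (spec_nonneg _) zero_le_one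
      _ = σr⁻¹ := by ring
  -- one-sided Wedin bounds
  have hWa : spec ((1 - Ut * Utᵀ) * (Ub * Ubᵀ)) ≤ δ := by
    have hid : (1 - Ut * Utᵀ) * (Ub * Ubᵀ) = (1 - Ut * Utᵀ) * ((Xb - Xt) * (Vb * Dinv * Ubᵀ)) := by
      rw [Matrix.sub_mul Xb Xt, Matrix.mul_sub, hXbG, ← Matrix.mul_assoc (1 - Ut * Utᵀ) Xt _,
        hPuXt, Matrix.zero_mul, sub_zero]
    rw [hid, hδdef]
    calc spec ((1 - Ut * Utᵀ) * ((Xb - Xt) * (Vb * Dinv * Ubᵀ)))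
        ≤ spec (1 - Ut * Utᵀ) * spec ((Xb - Xt) * (Vb * Dinv * Ubᵀ)) := spec_mul_le _ _
      _ ≤ 1 * (spec (Xb - Xt) * spec (Vb * Dinv * Ubᵀ)) :=
          mul_le_mul (proj_spec_le_one (projC (projP hUt))) (spec_mul_le _ _)
            (spec_nonneg _) zero_le_one
      _ ≤ 1 * (spec (Xt - Xb) * σr⁻¹) := by
          rw [spec_sub_rev Xb Xt]
          exact mul_le_mul_of_nonneg_left
            (mul_le_mul_of_nonneg_left hspecG (spec_nonneg _)) zero_le_one
      _ = spec (Xt - Xb) / σr := by rw [one_mul, div_eq_mul_inv]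
  have hWb : spec ((Vb * Vbᵀ) * (1 - Vt * Vtᵀ)) ≤ δ := by
    have hid : (Vb * Dinv * Ubᵀ) * ((Xb - Xt) * (1 - Vt * Vtᵀ))
        = (Vb * Vbᵀ) * (1 - Vt * Vtᵀ) := by
      rw [Matrix.sub_mul Xb Xt, hXtPv, sub_zero,
        ← Matrix.mul_assoc (Vb * Dinv * Ubᵀ) Xb (1 - Vt * Vtᵀ), hGXb]
    rw [← hid, hδdef]
    calc spec ((Vb * Dinv * Ubᵀ) * ((Xb - Xt) * (1 - Vt * Vtᵀ)))
        ≤ spec (Vb * Dinv * Ubᵀ) * spec ((Xb - Xt) * (1 - Vt * Vtᵀ)) := spec_mul_le _ _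
      _ ≤ σr⁻¹ * (spec (Xb - Xt) * spec (1 - Vt * Vtᵀ)) :=
          mul_le_mul hspecG (spec_mul_le _ _) (spec_nonneg _) (by positivity)
      _ ≤ σr⁻¹ * (spec (Xt - Xb) * 1) := by
          rw [spec_sub_rev Xb Xt]
          exact mul_le_mul_of_nonneg_left
            (mul_le_mul_of_nonneg_left (proj_spec_le_one (projC (projP hVt)))
              (spec_nonneg _)) (by positivity)
      _ = spec (Xt - Xb) / σr := by rw [mul_one, div_eq_mul_inv, mul_comm]
  -- symmetrized bounds
  have hU2 : spec ((Ut * Utᵀ) * (1 - Ub * Ubᵀ)) ≤ δ := by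
    have htr : ((1 - Ub * Ubᵀ) * (Ut * Utᵀ))ᵀ = (Ut * Utᵀ) * (1 - Ub * Ubᵀ) := by
      rw [Matrix.transpose_mul, proj_symm (projP hUt), Matrix.transpose_sub,
        Matrix.transpose_one, proj_symm (projP hUb)]
    calc spec ((Ut * Utᵀ) * (1 - Ub * Ubᵀ))
        = spec ((1 - Ub * Ubᵀ) * (Ut * Utᵀ)) := by rw [← htr, spec_transpose]
      _ ≤ spec ((1 - Ut * Utᵀ) * (Ub * Ubᵀ)) := sym hUt hUb
      _ ≤ δ := hWa
  have hdU : spec (Ut * Utᵀ - Ub * Ubᵀ) ≤ δ :=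
    projdiff (projP hUt) (projP hUb) hδ0 hU2 hWa
  have hV1 : spec ((1 - Vt * Vtᵀ) * (Vb * Vbᵀ)) ≤ δ := by
    have htr : ((Vb * Vbᵀ) * (1 - Vt * Vtᵀ))ᵀ = (1 - Vt * Vtᵀ) * (Vb * Vbᵀ) := by
      rw [Matrix.transpose_mul, proj_symm (projP hVb), Matrix.transpose_sub,
        Matrix.transpose_one, proj_symm (projP hVt)]
    rw [← htr, spec_transpose]
    exact hWb
  have hV2 : spec ((Vt * Vtᵀ) * (1 - Vb * Vbᵀ)) ≤ δ := by
    have htr : ((1 - Vb * Vbᵀ) * (Vt * Vtᵀ))ᵀ = (Vt * Vtᵀ) * (1 - Vb * Vbᵀ) := by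
      rw [Matrix.transpose_mul, proj_symm (projP hVt), Matrix.transpose_sub,
        Matrix.transpose_one, proj_symm (projP hVb)]
    calc spec ((Vt * Vtᵀ) * (1 - Vb * Vbᵀ))
        = spec ((1 - Vb * Vbᵀ) * (Vt * Vtᵀ)) := by rw [← htr, spec_transpose]
      _ ≤ spec ((1 - Vt * Vtᵀ) * (Vb * Vbᵀ)) := sym hVt hVb
      _ ≤ δ := hV1
  have hdV : spec (Vt * Vtᵀ - Vb * Vbᵀ) ≤ δ :=
    projdiff (projP hVt) (projP hVb) hδ0 hV2 hV1
  -- decomposition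
  have hdecomp : P₁ Z - P₂ Z = (Ut * Utᵀ - Ub * Ubᵀ) * (Z * (1 - Vt * Vtᵀ))
      + (1 - Ub * Ubᵀ) * (Z * (Vt * Vtᵀ - Vb * Vbᵀ)) := by
    rw [hP₁ Z, hP₂ Z]
    simp only [Matrix.mul_sub, Matrix.sub_mul, Matrix.mul_add, Matrix.add_mul,
      Matrix.mul_one, Matrix.one_mul, Matrix.mul_assoc]
    abel
  -- final estimate
  have hPv1 : spec (1 - Vt * Vtᵀ) ≤ 1 := proj_spec_le_one (projC (projP hVt))
  have hQu1 : spec (1 - Ub * Ubᵀ) ≤ 1 := proj_spec_le_one (projC (projP hUb))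
  have hb1 : frob ((Ut * Utᵀ - Ub * Ubᵀ) * (Z * (1 - Vt * Vtᵀ))) ≤ δ * frob Z := by
    calc frob ((Ut * Utᵀ - Ub * Ubᵀ) * (Z * (1 - Vt * Vtᵀ)))
        ≤ spec (Ut * Utᵀ - Ub * Ubᵀ) * frob (Z * (1 - Vt * Vtᵀ)) := frob_mul_le_left _ _
      _ ≤ δ * (frob Z * 1) := by
          apply mul_le_mul hdU _ (frob_nonneg _) hδ0
          exact le_trans (frob_mul_le_right _ _)
            (mul_le_mul_of_nonneg_left hPv1 (frob_nonneg _))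
      _ = δ * frob Z := by rw [mul_one]
  have hb2 : frob ((1 - Ub * Ubᵀ) * (Z * (Vt * Vtᵀ - Vb * Vbᵀ))) ≤ δ * frob Z := by
    calc frob ((1 - Ub * Ubᵀ) * (Z * (Vt * Vtᵀ - Vb * Vbᵀ)))
        ≤ spec (1 - Ub * Ubᵀ) * frob (Z * (Vt * Vtᵀ - Vb * Vbᵀ)) := frob_mul_le_left _ _
      _ ≤ 1 * (frob Z * δ) := by
          apply mul_le_mul hQu1 _ (frob_nonneg _) zero_le_one
          exact le_trans (frob_mul_le_right _ _)
            (mul_le_mul_of_nonneg_left hdV (frob_nonneg _))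
      _ = δ * frob Z := by ring
  rw [hdecomp]
  have htot := le_trans (frob_add_le _ _) (add_le_add hb1 hb2)
  have heq : δ * frob Z + δ * frob Z = 2 * spec (Xt - Xb) / σr * frob Z := by
    rw [hδdef]; ring
  rw [heq] at htot
  exact htot
end
end

section
/- Let A : ℝ^{p₁×p₂} → ℝⁿ be linear with 2r-RIP constant R_{2r} < 1, let Xᵗ be a rank-r matrix with tangent-space projector P_{T} (P_T(Z) = P_U Z P_V + P_{U⊥} Z P_V + P_U Z P_{V⊥} for the singular subspaces U, V of Xᵗ), and suppose η ∈ T solves P_T(A*(A(η + Xᵗ) − y)) = 0. Then ⟨P_T(A*(A(Xᵗ) − y)), η⟩ = −‖A(η)‖₂² ≤ −(1−R_{2r})‖η‖_F², so η is a descent direction for f(X) = ½‖y − A(X)‖₂² restricted to the rank-r manifold whenever η ≠ 0. -/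
open Matrix
noncomputable section

lemma myrank_add_le {m n : Type*} [Fintype m] [Fintype n] [DecidableEq n]
    (A B : Matrix m n ℝ) : (A + B).rank ≤ A.rank + B.rank := by
  have h : LinearMap.range (A + B).mulVecLin ≤
      LinearMap.range A.mulVecLin ⊔ LinearMap.range B.mulVecLin := by
    rintro x ⟨v, rfl⟩
    rw [Matrix.mulVecLin_add]
    exact Submodule.add_mem_sup ⟨v, rfl⟩ ⟨v, rfl⟩
  calc (A + B).rank ≤ Module.finrank ℝ
        (LinearMap.range A.mulVecLin ⊔ LinearMap.range B.mulVecLin : Submodule ℝ (m → ℝ)) :=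
        Submodule.finrank_mono h
    _ ≤ A.rank + B.rank := Submodule.finrank_add_le_finrank_add_finrank _ _

lemma dot_eq_trace {m n : Type*} [Fintype m] [Fintype n]
    (A B : Matrix m n ℝ) : ∑ i, ∑ j, A i j * B i j = Matrix.trace (Aᵀ * B) := by
  simp only [Matrix.trace, Matrix.diag, Matrix.mul_apply, Matrix.transpose_apply]
  rw [Finset.sum_comm]

lemma sym_adj {m n : Type*} [Fintype m] [Fintype n]
    (L : Matrix m m ℝ) (R : Matrix n n ℝ) (hL : Lᵀ = L) (hR : Rᵀ = R)
    (W η : Matrix m n ℝ) :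
    ∑ i, ∑ j, (L * W * R) i j * η i j = ∑ i, ∑ j, W i j * (L * η * R) i j := by
  rw [dot_eq_trace, dot_eq_trace]
  rw [Matrix.transpose_mul, Matrix.transpose_mul, hR, hL]
  calc Matrix.trace (R * (Wᵀ * L) * η) = Matrix.trace (Wᵀ * L * η * R) :=
        (Matrix.trace_mul_cycle _ _ _).symm
    _ = Matrix.trace (Wᵀ * (L * η * R)) := by simp only [Matrix.mul_assoc]

/-- The Riemannian Gauss-Newton direction η is a descent direction:
⟨grad f(Xᵗ), η⟩ = −‖A(η)‖₂² ≤ −(1 − R_{2r})‖η‖_F². -/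
theorem stmt_16 {p₁ p₂ r n : ℕ}
    (A : Matrix (Fin p₁) (Fin p₂) ℝ →ₗ[ℝ] (Fin n → ℝ))
    (Astar : (Fin n → ℝ) →ₗ[ℝ] Matrix (Fin p₁) (Fin p₂) ℝ)
    (hadj : ∀ (Z : Matrix (Fin p₁) (Fin p₂) ℝ) (v : Fin n → ℝ),
      ∑ i, A Z i * v i = ∑ i, ∑ j, Z i j * Astar v i j)
    (R2r : ℝ) (hR2r : R2r < 1)
    (hRIP : ∀ Z : Matrix (Fin p₁) (Fin p₂) ℝ, Z.rank ≤ 2 * r →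
      (1 - R2r) * frob Z ^ 2 ≤ ∑ i, A Z i ^ 2 ∧ ∑ i, A Z i ^ 2 ≤ (1 + R2r) * frob Z ^ 2)
    (Xt : Matrix (Fin p₁) (Fin p₂) ℝ)
    (U : Matrix (Fin p₁) (Fin r) ℝ) (S : Matrix (Fin r) (Fin r) ℝ)
    (V : Matrix (Fin p₂) (Fin r) ℝ)
    (hXt : Xt = U * S * Vᵀ) (hU : Uᵀ * U = 1) (hV : Vᵀ * V = 1)
    (hrank : Xt.rank = r)
    (PT : Matrix (Fin p₁) (Fin p₂) ℝ → Matrix (Fin p₁) (Fin p₂) ℝ)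
    (hPT : ∀ Z, PT Z = U * Uᵀ * Z * (V * Vᵀ) + (1 - U * Uᵀ) * Z * (V * Vᵀ)
        + U * Uᵀ * Z * (1 - V * Vᵀ))
    (y : Fin n → ℝ)
    (η : Matrix (Fin p₁) (Fin p₂) ℝ) (hη : PT η = η)
    (hsol : PT (Astar (A (η + Xt) - y)) = 0) :
    (∑ i, ∑ j, PT (Astar (A Xt - y)) i j * η i j) = -(∑ i, A η i ^ 2) ∧
    -(∑ i, A η i ^ 2) ≤ -((1 - R2r) * frob η ^ 2) := by
  have hLsym : (U * Uᵀ)ᵀ = U * Uᵀ := by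
    rw [Matrix.transpose_mul, Matrix.transpose_transpose]
  have hL'sym : (1 - U * Uᵀ)ᵀ = 1 - U * Uᵀ := by
    rw [Matrix.transpose_sub, Matrix.transpose_one, hLsym]
  have hRsym : (V * Vᵀ)ᵀ = V * Vᵀ := by
    rw [Matrix.transpose_mul, Matrix.transpose_transpose]
  have hR'sym : (1 - V * Vᵀ)ᵀ = 1 - V * Vᵀ := by
    rw [Matrix.transpose_sub, Matrix.transpose_one, hRsym]
  -- self-adjointness of PT
  have adjPT : ∀ W : Matrix (Fin p₁) (Fin p₂) ℝ,
      ∑ i, ∑ j, PT W i j * η i j = ∑ i, ∑ j, W i j * PT η i j := by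
    intro W
    simp only [hPT, Matrix.add_apply, add_mul, mul_add, Finset.sum_add_distrib]
    rw [sym_adj _ _ hLsym hRsym, sym_adj _ _ hL'sym hRsym, sym_adj _ _ hLsym hR'sym]
  have key : ∀ W : Matrix (Fin p₁) (Fin p₂) ℝ,
      ∑ i, ∑ j, PT W i j * η i j = ∑ i, ∑ j, W i j * η i j := by
    intro W; rw [adjPT W, hη]
  -- the zero equation
  have hz : ∑ i, ∑ j, Astar (A (η + Xt) - y) i j * η i j = 0 := by
    rw [← key, hsol]; simp
  have hsplit : Astar (A (η + Xt) - y) = Astar (A Xt - y) + Astar (A η) := by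
    rw [← map_add]; congr 1
    rw [map_add]
    ext i; simp [Pi.sub_apply, Pi.add_apply]; ring
  have hAeta : ∑ i, ∑ j, Astar (A η) i j * η i j = ∑ i, A η i ^ 2 := by
    have h' : ∑ i, ∑ j, Astar (A η) i j * η i j = ∑ i, ∑ j, η i j * Astar (A η) i j :=
      Finset.sum_congr rfl fun i _ => Finset.sum_congr rfl fun j _ => mul_comm _ _
    rw [h', ← hadj]
    exact Finset.sum_congr rfl fun i _ => (pow_two (A η i)).symm
  have heq : (∑ i, ∑ j, PT (Astar (A Xt - y)) i j * η i j) = -(∑ i, A η i ^ 2) := by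
    rw [key]
    have h2 : ∑ i, ∑ j, Astar (A Xt - y) i j * η i j
        = ∑ i, ∑ j, Astar (A (η + Xt) - y) i j * η i j
          - ∑ i, ∑ j, Astar (A η) i j * η i j := by
      rw [hsplit]
      simp [Matrix.add_apply, add_mul, Finset.sum_add_distrib]
    rw [h2, hz, hAeta]; ring
  refine ⟨heq, ?_⟩
  -- rank bound
  have hηform : η = η * (V * Vᵀ) + U * Uᵀ * η * (1 - V * Vᵀ) := by
    conv_lhs => rw [← hη, hPT]
    rw [Matrix.sub_mul, Matrix.sub_mul, Matrix.one_mul]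
    abel
  have hrk : η.rank ≤ 2 * r := by
    rw [hηform]
    have h1 : (η * (V * Vᵀ)).rank ≤ r := by
      rw [← Matrix.mul_assoc]
      exact le_trans (Matrix.rank_mul_le_left _ _)
        (le_trans (Matrix.rank_mul_le_right _ _) (Matrix.rank_le_width V))
    have h2 : (U * Uᵀ * η * (1 - V * Vᵀ)).rank ≤ r := by
      have : U * Uᵀ * η * (1 - V * Vᵀ) = U * (Uᵀ * η * (1 - V * Vᵀ)) := by
        simp only [Matrix.mul_assoc]
      rw [this]
      exact le_trans (Matrix.rank_mul_le_left _ _) (Matrix.rank_le_width U)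
    calc (η * (V * Vᵀ) + U * Uᵀ * η * (1 - V * Vᵀ)).rank
        ≤ _ + _ := myrank_add_le _ _
      _ ≤ r + r := add_le_add h1 h2
      _ = 2 * r := (two_mul r).symm
  exact neg_le_neg (hRIP η hrk).1
end
end

section
/- Let W ∈ ℝ^{p₁×p₂} be a symmetric-structured block matrix of the form [[B − B̃, D₂ᵀ − D̃₂ᵀ],[D₁ − D̃₁, Δ]] where Δ = D₁B⁻¹D₂ᵀ − D̃₁B̃⁻¹D̃₂ᵀ, with B, B̃ invertible. If ‖D₁B⁻¹‖ ∨ ‖B⁻¹D₂ᵀ‖ ≤ ρ and ‖D̃₁B̃⁻¹‖ ∨ ‖B̃⁻¹D̃₂ᵀ‖ ≤ θ with ρ ≤ (4+√3)/(3√3) and θ ≤ 1/√3, then ‖W‖_F² ≤ 5(‖B − B̃‖_F² + ‖D₁ − D̃₁‖_F² + ‖D₂ − D̃₂‖_F²). -/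
open Matrix
noncomputable section

set_option linter.unusedSectionVars false

section Helpers

variable {m n k : Type*} [Fintype m] [Fintype n] [Fintype k]

lemma frob_nonneg (A : Matrix m n ℝ) : 0 ≤ frob A := Real.sqrt_nonneg _

lemma frob_sq (A : Matrix m n ℝ) : frob A ^ 2 = ∑ i, ∑ j, (A i j) ^ 2 :=
  Real.sq_sqrt (by positivity)

lemma frob_transpose (A : Matrix m n ℝ) : frob Aᵀ = frob A := by
  unfold frob
  rw [Finset.sum_comm]
  rfl

lemma frob_sub_comm (A B : Matrix m n ℝ) : frob (A - B) = frob (B - A) := by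
  unfold frob; congr 1; apply Finset.sum_congr rfl; intro i _
  apply Finset.sum_congr rfl; intro j _
  have : (A - B) i j = -((B - A) i j) := by simp [Matrix.sub_apply]
  rw [this]; ring

lemma spec_nonneg [DecidableEq n] (A : Matrix m n ℝ) : 0 ≤ spec A := norm_nonneg _

lemma euclid_norm_le [DecidableEq n] (A : Matrix m n ℝ) (x : EuclideanSpace ℝ n) :
    ‖Matrix.toEuclideanLin A x‖ ≤ spec A * ‖x‖ := by
  have := (LinearMap.toContinuousLinearMap (Matrix.toEuclideanLin A)).le_opNorm x
  simpa [spec] using this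

lemma frob_mul_left [DecidableEq k] [DecidableEq n] (A : Matrix m n ℝ) (M : Matrix n k ℝ) :
    frob (A * M) ≤ spec A * frob M := by
  have h2 : (frob (A * M))^2 ≤ (spec A * frob M)^2 := by
    rw [frob_sq, mul_pow, frob_sq]
    calc ∑ i, ∑ j, ((A * M) i j)^2 = ∑ j, ∑ i, ((A * M) i j)^2 := by rw [Finset.sum_comm]
      _ ≤ ∑ j, spec A ^2 * ∑ i, (M i j)^2 := by
          apply Finset.sum_le_sum
          intro j _
          set v : EuclideanSpace ℝ n := (WithLp.equiv 2 (n → ℝ)).symm (fun i => M i j) with hv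
          have hAv : ∀ i, (A * M) i j = (Matrix.toEuclideanLin A v) i := by
            intro i
            simp [Matrix.toEuclideanLin_apply, hv, Matrix.mul_apply, Matrix.mulVec,
              dotProduct]
          have hnv : ‖v‖^2 = ∑ i, (M i j)^2 := by
            rw [EuclideanSpace.norm_eq, Real.sq_sqrt (by positivity)]
            simp [hv, sq_abs]
          have hnAv : ∑ i, ((A * M) i j)^2 = ‖Matrix.toEuclideanLin A v‖^2 := by
            rw [EuclideanSpace.norm_eq, Real.sq_sqrt (by positivity)]
            exact Finset.sum_congr rfl fun i _ => by rw [hAv i, Real.norm_eq_abs, sq_abs]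
          rw [hnAv, ← hnv]
          nlinarith [euclid_norm_le A v, spec_nonneg A, norm_nonneg v,
            norm_nonneg (Matrix.toEuclideanLin A v)]
      _ = spec A ^2 * ∑ i, ∑ j, (M i j)^2 := by
          rw [← Finset.mul_sum, Finset.sum_comm]
  have h3 := Real.sqrt_le_sqrt h2
  rwa [Real.sqrt_sq (frob_nonneg _), Real.sqrt_sq (mul_nonneg (spec_nonneg _) (frob_nonneg _))] at h3

lemma inner_transpose [DecidableEq m] [DecidableEq n] (A : Matrix m n ℝ) (x : EuclideanSpace ℝ m) (y : EuclideanSpace ℝ n) :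
    inner ℝ (Matrix.toEuclideanLin Aᵀ x) y = (inner ℝ x (Matrix.toEuclideanLin A y) : ℝ) := by
  simp only [PiLp.inner_apply, RCLike.inner_apply, starRingEnd_apply, star_trivial,
    Matrix.toEuclideanLin_apply, Matrix.mulVec, dotProduct, Matrix.transpose_apply,
    PiLp.toLp_apply]
  simp only [Finset.sum_mul, Finset.mul_sum]
  rw [Finset.sum_comm]
  apply Finset.sum_congr rfl; intro i _
  apply Finset.sum_congr rfl; intro j _
  ring

lemma spec_transpose_le [DecidableEq m] [DecidableEq n] (A : Matrix m n ℝ) : spec Aᵀ ≤ spec A := by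
  apply ContinuousLinearMap.opNorm_le_bound _ (spec_nonneg A)
  intro x
  simp only [LinearMap.coe_toContinuousLinearMap']
  set t := ‖Matrix.toEuclideanLin Aᵀ x‖ with ht
  have htn : 0 ≤ t := norm_nonneg _
  have h1 : t^2 ≤ spec A * ‖x‖ * t := by
    have e1 : t^2 = inner ℝ (Matrix.toEuclideanLin Aᵀ x) (Matrix.toEuclideanLin Aᵀ x) := by
      rw [real_inner_self_eq_norm_sq]
    rw [e1, inner_transpose]
    calc (inner ℝ x (Matrix.toEuclideanLin A (Matrix.toEuclideanLin Aᵀ x)) : ℝ)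
        ≤ ‖x‖ * ‖Matrix.toEuclideanLin A (Matrix.toEuclideanLin Aᵀ x)‖ := real_inner_le_norm _ _
      _ ≤ ‖x‖ * (spec A * t) := by
          apply mul_le_mul_of_nonneg_left (euclid_norm_le A _) (norm_nonneg x)
      _ = spec A * ‖x‖ * t := by ring
  rcases eq_or_lt_of_le htn with h | h
  · rw [← h]; exact mul_nonneg (spec_nonneg A) (norm_nonneg x)
  · nlinarith

lemma frob_mul_right [DecidableEq m] [DecidableEq n] [DecidableEq k] (M : Matrix m n ℝ) (A : Matrix n k ℝ) :
    frob (M * A) ≤ frob M * spec A := by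
  have h : frob (M * A) = frob (Aᵀ * Mᵀ) := by
    rw [← Matrix.transpose_mul, frob_transpose]
  rw [h]
  calc frob (Aᵀ * Mᵀ) ≤ spec Aᵀ * frob Mᵀ := frob_mul_left _ _
    _ ≤ spec A * frob M := by
        rw [frob_transpose]
        exact mul_le_mul_of_nonneg_right (spec_transpose_le A) (frob_nonneg _)
    _ = frob M * spec A := mul_comm _ _

section
attribute [local instance] Matrix.frobeniusNormedAddCommGroup

lemma frob_eq_norm (A : Matrix m n ℝ) : frob A = ‖A‖ := by
  rw [Matrix.frobenius_norm_def, frob, Real.sqrt_eq_rpow]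
  congr 1
  exact Finset.sum_congr rfl fun i _ => Finset.sum_congr rfl fun j _ => by
    exact (by
      rw [show (2:ℝ) = ((2:ℕ):ℝ) from by norm_num, Real.rpow_natCast, Real.norm_eq_abs, sq_abs] :
      A i j ^2 = ‖A i j‖ ^ (2:ℝ))

lemma frob_add_le (A B : Matrix m n ℝ) : frob (A + B) ≤ frob A + frob B := by
  rw [frob_eq_norm, frob_eq_norm, frob_eq_norm]; exact norm_add_le A B

end

lemma frob_fromBlocks_sq {m' n' : Type*} [Fintype m'] [Fintype n']
    (A : Matrix m n ℝ) (B : Matrix m n' ℝ) (C : Matrix m' n ℝ) (D : Matrix m' n' ℝ) :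
    frob (Matrix.fromBlocks A B C D) ^ 2 = frob A ^ 2 + frob B ^ 2 + frob C ^ 2 + frob D ^ 2 := by
  rw [frob_sq, frob_sq, frob_sq, frob_sq, frob_sq]
  rw [Fintype.sum_sum_type]
  simp only [Fintype.sum_sum_type, Matrix.fromBlocks_apply₁₁, Matrix.fromBlocks_apply₁₂,
    Matrix.fromBlocks_apply₂₁, Matrix.fromBlocks_apply₂₂, Finset.sum_add_distrib]
  ring

end Helpers

set_option maxHeartbeats 1000000 in
/-- Quantitative block error bound: if ρ ≤ (4+√3)/(3√3) and θ ≤ 1/√3 then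
‖W‖_F² ≤ 5(‖B − B̃‖_F² + ‖D₁ − D̃₁‖_F² + ‖D₂ − D̃₂‖_F²). -/
theorem stmt_18 {p₁ p₂ r : ℕ}
    (B Bt : Matrix (Fin r) (Fin r) ℝ) (hB : IsUnit B) (hBt : IsUnit Bt)
    (D₁ D₁t : Matrix (Fin (p₁ - r)) (Fin r) ℝ)
    (D₂ D₂t : Matrix (Fin (p₂ - r)) (Fin r) ℝ)
    (ρ θ : ℝ)
    (hρ : max (spec (D₁ * B⁻¹)) (spec (B⁻¹ * D₂ᵀ)) ≤ ρ)
    (hθ : max (spec (D₁t * Bt⁻¹)) (spec (Bt⁻¹ * D₂tᵀ)) ≤ θ)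
    (hρub : ρ ≤ (4 + Real.sqrt 3) / (3 * Real.sqrt 3))
    (hθub : θ ≤ 1 / Real.sqrt 3)
    (W : Matrix (Fin r ⊕ Fin (p₁ - r)) (Fin r ⊕ Fin (p₂ - r)) ℝ)
    (hW : W = fromBlocks (B - Bt) (D₂ᵀ - D₂tᵀ) (D₁ - D₁t)
        (D₁ * B⁻¹ * D₂ᵀ - D₁t * Bt⁻¹ * D₂tᵀ)) :
    frob W ^ 2 ≤ 5 * (frob (B - Bt) ^ 2 + frob (D₁ - D₁t) ^ 2 + frob (D₂ - D₂t) ^ 2) := by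
  have hBd : IsUnit B.det := (Matrix.isUnit_iff_isUnit_det B).mp hB
  have hBtd : IsUnit Bt.det := (Matrix.isUnit_iff_isUnit_det Bt).mp hBt
  -- spec bounds
  have hρ1 : spec (D₁ * B⁻¹) ≤ ρ := le_trans (le_max_left _ _) hρ
  have hθ1 : spec (Bt⁻¹ * D₂tᵀ) ≤ θ := le_trans (le_max_right _ _) hθ
  have hρ0 : 0 ≤ ρ := le_trans (spec_nonneg _) hρ1
  have hθ0 : 0 ≤ θ := le_trans (spec_nonneg _) hθ1
  -- decomposition of Δ
  set Δ : Matrix (Fin (p₁ - r)) (Fin (p₂ - r)) ℝ := D₁ * B⁻¹ * D₂ᵀ - D₁t * Bt⁻¹ * D₂tᵀ with hΔdef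
  have hdec : Δ = (D₁ * B⁻¹) * (D₂ᵀ - D₂tᵀ) + (D₁ * B⁻¹) * ((Bt - B) * (Bt⁻¹ * D₂tᵀ))
      + (D₁ - D₁t) * (Bt⁻¹ * D₂tᵀ) := by
    rw [hΔdef]
    simp only [Matrix.mul_sub, Matrix.sub_mul, Matrix.mul_assoc,
      Matrix.mul_nonsing_inv_cancel_left _ _ hBtd, Matrix.nonsing_inv_mul_cancel_left _ _ hBd]
    abel
  -- Frobenius abbreviations
  set a := frob (B - Bt) with ha
  set b := frob (D₁ - D₁t) with hb
  set c := frob (D₂ - D₂t) with hc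
  have ha0 : 0 ≤ a := frob_nonneg _
  have hb0 : 0 ≤ b := frob_nonneg _
  have hc0 : 0 ≤ c := frob_nonneg _
  have hct : frob (D₂ᵀ - D₂tᵀ) = c := by
    rw [← Matrix.transpose_sub, frob_transpose]
  have hat : frob (Bt - B) = a := frob_sub_comm _ _
  -- bound on frob Δ
  have hd : frob Δ ≤ ρ * c + ρ * (a * θ) + b * θ := by
    rw [hdec]
    calc frob ((D₁ * B⁻¹) * (D₂ᵀ - D₂tᵀ) + (D₁ * B⁻¹) * ((Bt - B) * (Bt⁻¹ * D₂tᵀ))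
          + (D₁ - D₁t) * (Bt⁻¹ * D₂tᵀ))
        ≤ frob ((D₁ * B⁻¹) * (D₂ᵀ - D₂tᵀ) + (D₁ * B⁻¹) * ((Bt - B) * (Bt⁻¹ * D₂tᵀ)))
          + frob ((D₁ - D₁t) * (Bt⁻¹ * D₂tᵀ)) := frob_add_le _ _
      _ ≤ frob ((D₁ * B⁻¹) * (D₂ᵀ - D₂tᵀ)) + frob ((D₁ * B⁻¹) * ((Bt - B) * (Bt⁻¹ * D₂tᵀ)))
          + frob ((D₁ - D₁t) * (Bt⁻¹ * D₂tᵀ)) := by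
          have := frob_add_le ((D₁ * B⁻¹) * (D₂ᵀ - D₂tᵀ))
            ((D₁ * B⁻¹) * ((Bt - B) * (Bt⁻¹ * D₂tᵀ)))
          linarith
      _ ≤ ρ * c + ρ * (a * θ) + b * θ := by
          have t1 : frob ((D₁ * B⁻¹) * (D₂ᵀ - D₂tᵀ)) ≤ ρ * c := by
            calc frob ((D₁ * B⁻¹) * (D₂ᵀ - D₂tᵀ)) ≤ spec (D₁ * B⁻¹) * frob (D₂ᵀ - D₂tᵀ) :=
                  frob_mul_left _ _
              _ ≤ ρ * c := by rw [hct]; exact mul_le_mul_of_nonneg_right hρ1 hc0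
          have t2 : frob ((D₁ * B⁻¹) * ((Bt - B) * (Bt⁻¹ * D₂tᵀ))) ≤ ρ * (a * θ) := by
            calc frob ((D₁ * B⁻¹) * ((Bt - B) * (Bt⁻¹ * D₂tᵀ)))
                ≤ spec (D₁ * B⁻¹) * frob ((Bt - B) * (Bt⁻¹ * D₂tᵀ)) := frob_mul_left _ _
              _ ≤ ρ * (a * θ) := by
                  apply mul_le_mul hρ1 _ (frob_nonneg _) hρ0
                  calc frob ((Bt - B) * (Bt⁻¹ * D₂tᵀ)) ≤ frob (Bt - B) * spec (Bt⁻¹ * D₂tᵀ) :=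
                      frob_mul_right _ _
                    _ ≤ a * θ := by rw [hat]; exact mul_le_mul_of_nonneg_left hθ1 ha0
          have t3 : frob ((D₁ - D₁t) * (Bt⁻¹ * D₂tᵀ)) ≤ b * θ := by
            calc frob ((D₁ - D₁t) * (Bt⁻¹ * D₂tᵀ)) ≤ frob (D₁ - D₁t) * spec (Bt⁻¹ * D₂tᵀ) :=
                frob_mul_right _ _
              _ ≤ b * θ := mul_le_mul_of_nonneg_left hθ1 hb0
          linarith
  have hd0 : 0 ≤ frob Δ := frob_nonneg _
  -- numeric bounds
  have hs2 : Real.sqrt 3 ^ 2 = 3 := Real.sq_sqrt (by norm_num)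
  have hs0 : 0 < Real.sqrt 3 := Real.sqrt_pos.mpr (by norm_num)
  have hsle2 : Real.sqrt 3 ≤ 2 := by nlinarith
  have hρs : ρ * (3 * Real.sqrt 3) ≤ 4 + Real.sqrt 3 :=
    (le_div_iff₀ (by positivity)).mp hρub
  have hθs : θ * Real.sqrt 3 ≤ 1 := (le_div_iff₀ hs0).mp hθub
  have hρ' : 3 * ρ ≤ 2 * Real.sqrt 3 := by nlinarith
  have hρ2 : ρ ^ 2 ≤ 4 / 3 := by
    nlinarith [mul_le_mul hρ' hρ' (by linarith) (by linarith)]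
  have hθs' : θ * Real.sqrt 3 * (θ * Real.sqrt 3) ≤ 1 :=
    by nlinarith [mul_le_mul hθs hθs (by positivity) (by norm_num : (0:ℝ) ≤ 1)]
  have hθ2 : θ ^ 2 ≤ 4 / 3 := by nlinarith
  have hρθ : ρ * θ ≤ 2 / 3 := by
    have h1 : 3 * ρ * θ ≤ 2 * Real.sqrt 3 * θ := by
      have := mul_le_mul_of_nonneg_right hρ' hθ0
      linarith
    have h2 : 2 * Real.sqrt 3 * θ ≤ 2 := by nlinarith
    linarith
  have hρθ0 : 0 ≤ ρ * θ := mul_nonneg hρ0 hθ0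
  have hρθ2 : (ρ * θ) ^ 2 ≤ 4 / 3 := by nlinarith
  -- combine
  rw [hW, frob_fromBlocks_sq, hct, ← ha, ← hb]
  have hd2 : frob Δ ^ 2 ≤ (ρ * c + ρ * (a * θ) + b * θ) ^ 2 := by nlinarith
  have hfin : (ρ * c + ρ * (a * θ) + b * θ) ^ 2 ≤ 4 * (a ^ 2 + b ^ 2 + c ^ 2) := by
    nlinarith [sq_nonneg (ρ * c - ρ * θ * a), sq_nonneg (ρ * c - θ * b),
      sq_nonneg (ρ * θ * a - θ * b), sq_nonneg a, sq_nonneg b, sq_nonneg c,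
      mul_le_mul_of_nonneg_right hρ2 (sq_nonneg c),
      mul_le_mul_of_nonneg_right hθ2 (sq_nonneg b),
      mul_le_mul_of_nonneg_right hρθ2 (sq_nonneg a)]
  linarith
end
end
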